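/- arXiv:1310.5298 — 6 statements merged into one kernel-verified Lean document; each statement's English description precedes it below -/
import Mathlib

section
/- For α ∈ (0,1) and all x ∈ [0, π], the function h(α,x) = ((2+α)/2)·cos((α/2)(π−x)) − (α/2)·cos((α/2)(π−x) − x) satisfies ∂h/∂x (α,x) = ((α(2+α))/2)·sin(x/2)·cos((α/2)(π−x) − x/2) ≥ 0. -/
open Real

theorem h_deriv_nonneg (α : ℝ) (hα : α ∈ Set.Ioo (0 : ℝ) 1)
    (x : ℝ) (hx : x ∈ Set.Icc 0 π) :
    HasDerivAt
      (fun y : ℝ =>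
        (2 + α) / 2 * Real.cos (α / 2 * (π - y)) - α / 2 * Real.cos (α / 2 * (π - y) - y))
      (α * (2 + α) / 2 * Real.sin (x / 2) * Real.cos (α / 2 * (π - x) - x / 2)) x ∧
    0 ≤ α * (2 + α) / 2 * Real.sin (x / 2) * Real.cos (α / 2 * (π - x) - x / 2) := by
  obtain ⟨hα0, hα1⟩ := hα
  obtain ⟨hx0, hxπ⟩ := hx
  constructor
  · have h1 : HasDerivAt (fun y : ℝ => α / 2 * (π - y)) (α / 2 * (-1)) x :=
      ((hasDerivAt_id x).const_sub π).const_mul (α / 2)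
    have h2 : HasDerivAt (fun y : ℝ => α / 2 * (π - y) - y) (α / 2 * (-1) - 1) x :=
      h1.sub (hasDerivAt_id x)
    have H := ((h1.cos.const_mul ((2 + α) / 2)).sub (h2.cos.const_mul (α / 2)))
    refine H.congr_deriv ?_
    have key : Real.sin (α / 2 * (π - x)) - Real.sin (α / 2 * (π - x) - x) =
        2 * Real.sin (x / 2) * Real.cos (α / 2 * (π - x) - x / 2) := by
      rw [Real.sin_sub_sin]
      ring_nf
    linear_combination ((α * (2 + α)) / 4) * key
  · have hs : 0 ≤ Real.sin (x / 2) := by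
      apply Real.sin_nonneg_of_nonneg_of_le_pi <;> nlinarith [Real.pi_pos]
    have hc : 0 ≤ Real.cos (α / 2 * (π - x) - x / 2) := by
      apply Real.cos_nonneg_of_mem_Icc
      constructor
      · nlinarith
      · nlinarith
    positivity
end

section
/- For α ∈ (0,1) and all x ∈ [0, π], the function h(α,x) = ((2+α)/2)·cos((α/2)(π−x)) − (α/2)·cos((α/2)(π−x) − x) satisfies h(α,x) ≥ cos(απ/2) ≥ 0; in particular h(α,x) ≥ 0. -/
open Real

theorem h_lower_bound (α : ℝ) (hα : α ∈ Set.Ioo (0 : ℝ) 1)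
    (x : ℝ) (hx : x ∈ Set.Icc 0 π) :
    Real.cos (α * π / 2) ≤
      (2 + α) / 2 * Real.cos (α / 2 * (π - x)) - α / 2 * Real.cos (α / 2 * (π - x) - x) ∧
    0 ≤ Real.cos (α * π / 2) := by
  obtain ⟨hα0, hα1⟩ := hα
  obtain ⟨hx0, hxπ⟩ := hx
  have hπ := Real.pi_pos
  set θ := α / 2 * (π - x) with hθ
  have hθ0 : 0 ≤ θ := mul_nonneg (by linarith) (by linarith)
  have hθle : θ ≤ π / 2 := by
    rw [hθ]; nlinarith [mul_nonneg hx0 (le_of_lt hα0)]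
  have hcosθ : 0 ≤ Real.cos θ := Real.cos_nonneg_of_mem_Icc ⟨by linarith, hθle⟩
  have hsinθ : 0 ≤ Real.sin θ := Real.sin_nonneg_of_nonneg_of_le_pi hθ0 (by linarith)
  have hkey : α * π / 2 = θ + α * (x / 2) := by rw [hθ]; ring
  constructor
  · rw [hkey, Real.cos_add]
    have hsub : θ - x = θ - x := rfl
    rw [Real.cos_sub]
    -- (i) : cos(α*(x/2)) ≤ (2+α)/2 - α/2 * cos x
    have hi : Real.cos (α * (x / 2)) ≤ (2 + α) / 2 - α / 2 * Real.cos x := by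
      nlinarith [Real.cos_le_one (α * (x / 2)), Real.cos_le_one x]
    -- (ii) : α/2 * sin x ≤ sin (α*(x/2))
    have hsinx2 : 0 ≤ Real.sin (x / 2) :=
      Real.sin_nonneg_of_nonneg_of_le_pi (by linarith) (by linarith)
    have hconc : α * Real.sin (x / 2) ≤ Real.sin (α * (x / 2)) := by
      have h0 : (0:ℝ) ∈ Set.Icc (0:ℝ) π := Set.mem_Icc.mpr ⟨le_refl (0:ℝ), le_of_lt hπ⟩
      have hy : x / 2 ∈ Set.Icc (0:ℝ) π := Set.mem_Icc.mpr ⟨by linarith, by linarith⟩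
      have h := (strictConcaveOn_sin_Icc.concaveOn).2 h0 hy
        (by linarith : (0:ℝ) ≤ 1 - α) (le_of_lt hα0) (by ring)
      simp only [smul_eq_mul, mul_zero, zero_add, Real.sin_zero] at h
      linarith
    have hsinx : Real.sin x = 2 * Real.sin (x / 2) * Real.cos (x / 2) := by
      rw [show x = 2 * (x / 2) by ring, Real.sin_two_mul]
      ring_nf
    have hii : α / 2 * Real.sin x ≤ Real.sin (α * (x / 2)) := by
      have hc1 : Real.cos (x / 2) ≤ 1 := Real.cos_le_one _
      nlinarith [mul_nonneg (le_of_lt hα0) hsinx2]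
    nlinarith [mul_le_mul_of_nonneg_left hi hcosθ, mul_le_mul_of_nonneg_left hii hsinθ]
  · apply Real.cos_nonneg_of_mem_Icc
    constructor <;> nlinarith
end

section
/- For α ∈ (0,1), the generating function f(α,x) = λ₀^{(α)} + Σ_{k≥1} λ_k^{(α)} cos(kx), where λ₀^{(α)} = (2+α)/2 · g₀^{(α)} and λ_k^{(α)} = (2+α)/2 · g_k^{(α)} − (α/2) g_{k−1}^{(α)} for k ≥ 1 with g_k^{(α)} = (−1)^k(α choose k), is nonnegative for all x ∈ [0, π]; indeed f(α,x) = (2 sin(x/2))^α · [ ((2+α)/2) cos((α/2)(π−x)) − (α/2) cos((α/2)(π−x) − x) ] ≥ 0. -/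
open Real

/-- Grünwald coefficients `g_k^{(α)} = (-1)^k (α choose k)`. -/
noncomputable def grunwaldG (α : ℝ) (k : ℕ) : ℝ :=
  (-1) ^ k * ((∏ i ∈ Finset.range k, (α - i)) / (k.factorial : ℝ))

lemma grunwaldG_cast (α : ℝ) (n : ℕ) :
    ((grunwaldG α n : ℝ) : ℂ) = (-1)^n * ((∏ i ∈ Finset.range n, ((α:ℂ) - i)) / n.factorial) := by
  rw [grunwaldG]; push_cast; ring

/-- `hG α n = ∏_{i<n} (i+1-α)/(i+1) = (-1)^n * (α-1 choose n)`. -/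
noncomputable def hG (α : ℝ) (n : ℕ) : ℝ :=
  ∏ i ∈ Finset.range n, ((i + 1 - α) / (i + 1))

lemma hG_zero (α : ℝ) : hG α 0 = 1 := by simp [hG]

lemma hG_nonneg {α : ℝ} (hα : α ∈ Set.Ioo (0:ℝ) 1) (n : ℕ) : 0 ≤ hG α n := by
  refine Finset.prod_nonneg fun i _ => div_nonneg ?_ (by positivity)
  have h1 : α ≤ 1 := hα.2.le
  have h2 : (1:ℝ) ≤ (i:ℝ) + 1 := by
    have := Nat.cast_nonneg (α := ℝ) i; linarith
  linarith

lemma hG_succ (α : ℝ) (n : ℕ) :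
    hG α (n + 1) = hG α n * ((n + 1 - α) / (n + 1)) := Finset.prod_range_succ _ _

lemma hG_succ_le {α : ℝ} (hα : α ∈ Set.Ioo (0:ℝ) 1) (n : ℕ) : hG α (n+1) ≤ hG α n := by
  rw [hG_succ]
  have h1 : ((n:ℝ) + 1 - α) / (n + 1) ≤ 1 := by
    rw [div_le_one (by positivity)]; linarith [hα.1]
  calc hG α n * ((n + 1 - α) / (n + 1)) ≤ hG α n * 1 :=
        mul_le_mul_of_nonneg_left h1 (hG_nonneg hα n)
    _ = hG α n := mul_one _

lemma grunwaldG_zero (α : ℝ) : grunwaldG α 0 = 1 := by simp [grunwaldG]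

lemma grunwaldG_succ_eq {α : ℝ} (k : ℕ) :
    grunwaldG α (k + 1) = -(α / (k + 1)) * hG α k := by
  have hprod : ∏ i ∈ Finset.range (k+1), (α - i) = α * ∏ i ∈ Finset.range k, (α - (i+1)) := by
    rw [Finset.prod_range_succ']
    simp only [Nat.cast_zero, sub_zero]
    rw [mul_comm]
    refine congrArg _ (Finset.prod_congr rfl fun i _ => ?_)
    push_cast; ring
  have h2 : ∏ i ∈ Finset.range k, (α - ((i:ℝ)+1)) = (-1)^k * ∏ i ∈ Finset.range k, ((i:ℝ) + 1 - α) := by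
    calc ∏ i ∈ Finset.range k, (α - ((i:ℝ)+1))
        = ∏ i ∈ Finset.range k, ((-1) * ((i:ℝ)+1-α)) :=
          Finset.prod_congr rfl fun i _ => by ring
      _ = (-1)^k * ∏ i ∈ Finset.range k, ((i:ℝ)+1-α) := by
          rw [Finset.prod_mul_distrib, Finset.prod_const, Finset.card_range]
  have hfact : ((k+1).factorial : ℝ) = (k+1) * ∏ i ∈ Finset.range k, ((i:ℝ)+1) := by
    rw [Nat.factorial_succ, ← Finset.prod_range_add_one_eq_factorial]
    push_cast; ring
  have hne : ∀ i ∈ Finset.range k, ((i:ℝ) + 1) ≠ 0 := fun i _ => by positivity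
  rw [grunwaldG, hprod, h2, hfact, hG, Finset.prod_div_distrib]
  rw [pow_succ]
  have hkne : ((k:ℝ)+1) ≠ 0 := by positivity
  have hPne : ∏ i ∈ Finset.range k, ((i:ℝ)+1) ≠ 0 := Finset.prod_ne_zero_iff.2 hne
  field_simp
  have hsq : ((-1:ℝ))^k * (-1)^k = 1 := by
    rw [← pow_add]; exact Even.neg_one_pow ⟨k, rfl⟩
  have hsq' : ((-1:ℝ))^(k*2) = 1 := by rw [mul_comm, pow_mul]; norm_num
  rw [← pow_mul, hsq']; ring

lemma grunwaldG_succ_telescope {α : ℝ} (k : ℕ) :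
    grunwaldG α (k + 1) = hG α (k + 1) - hG α k := by
  rw [grunwaldG_succ_eq, hG_succ]
  have hkne : ((k:ℝ)+1) ≠ 0 := by positivity
  field_simp
  ring

lemma hG_le_exp {α : ℝ} (hα : α ∈ Set.Ioo (0:ℝ) 1) (n : ℕ) :
    hG α n ≤ Real.exp (-(α * ∑ i ∈ Finset.range n, (1:ℝ)/(i+1))) := by
  rw [Finset.mul_sum, ← Finset.sum_neg_distrib, Real.exp_sum]
  refine Finset.prod_le_prod (fun i _ => ?_) (fun i _ => ?_)
  · refine div_nonneg ?_ (by positivity)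
    have h2 : (1:ℝ) ≤ (i:ℝ) + 1 := by
      have := Nat.cast_nonneg (α := ℝ) i; linarith
    linarith [hα.2.le]
  · have hpos : (0:ℝ) < (i:ℝ) + 1 := by positivity
    have h1 : ((i:ℝ) + 1 - α) / ((i:ℝ)+1) = 1 + (-(α * (1/((i:ℝ)+1)))) := by
      field_simp; ring
    rw [h1]
    have := Real.add_one_le_exp (-(α * (1/((i:ℝ)+1))))
    linarith

lemma hG_tendsto_zero {α : ℝ} (hα : α ∈ Set.Ioo (0:ℝ) 1) :
    Filter.Tendsto (hG α) Filter.atTop (nhds 0) := by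
  have hsum : Filter.Tendsto (fun n => ∑ i ∈ Finset.range n, (1:ℝ)/(i+1))
      Filter.atTop Filter.atTop := by
    refine Real.tendsto_sum_range_one_div_nat_succ_atTop.congr fun n => ?_
    exact Finset.sum_congr rfl fun i _ => by ring
  have hexp : Filter.Tendsto (fun n => Real.exp (-(α * ∑ i ∈ Finset.range n, (1:ℝ)/(i+1))))
      Filter.atTop (nhds 0) := by
    refine Real.tendsto_exp_atBot.comp ?_
    exact (Filter.tendsto_neg_atBot_iff.mpr (hsum.const_mul_atTop hα.1))
  exact squeeze_zero (fun n => hG_nonneg hα n) (fun n => hG_le_exp hα n) hexp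

lemma summable_abs_grunwald_succ {α : ℝ} (hα : α ∈ Set.Ioo (0:ℝ) 1) :
    Summable fun k => |grunwaldG α (k+1)| := by
  have habs : ∀ k, |grunwaldG α (k+1)| = hG α k - hG α (k+1) := by
    intro k
    rw [grunwaldG_succ_telescope, abs_sub_comm, abs_of_nonneg (by linarith [hG_succ_le hα k])]
  refine (summable_of_sum_range_le (c := 1) (fun k => by rw [habs]; linarith [hG_succ_le hα k]) ?_)
  intro n
  have : ∑ k ∈ Finset.range n, |grunwaldG α (k+1)| = hG α 0 - hG α n := by
    rw [← Finset.sum_range_sub' (hG α) n]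
    exact Finset.sum_congr rfl fun i _ => habs i
  rw [this, hG_zero]
  linarith [hG_nonneg hα n]

lemma hasSum_grunwald_succ {α : ℝ} (hα : α ∈ Set.Ioo (0:ℝ) 1) :
    HasSum (fun k => grunwaldG α (k+1)) (-1) := by
  have hsummable : Summable fun k => grunwaldG α (k+1) :=
    (summable_abs_grunwald_succ hα).of_abs
  rw [hsummable.hasSum_iff_tendsto_nat]
  have : ∀ n, ∑ k ∈ Finset.range n, grunwaldG α (k+1) = hG α n - 1 := by
    intro n
    rw [show (1:ℝ) = hG α 0 from (hG_zero α).symm, ← Finset.sum_range_sub (hG α) n]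
    exact Finset.sum_congr rfl fun i _ => grunwaldG_succ_telescope i
  simp only [this]
  have := (hG_tendsto_zero hα).sub_const 1
  simpa using this

lemma summable_abs_grunwald {α : ℝ} (hα : α ∈ Set.Ioo (0:ℝ) 1) :
    Summable fun k => |grunwaldG α k| :=
  (summable_nat_add_iff 1).mp (summable_abs_grunwald_succ hα)

lemma slit_of_ball {z : ℂ} (hz : z ∈ Metric.ball (0:ℂ) 1) :
    (1 + z) ∈ Complex.slitPlane := by
  left
  have h1 : |z.re| ≤ ‖z‖ := Complex.abs_re_le_norm z
  have h2 : ‖z‖ < 1 := by simpa [Complex.dist_eq] using hz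
  simp only [Complex.add_re, Complex.one_re]
  cases abs_le.mp h1 with
  | intro a b => linarith

lemma hasDerivAt_one_add_cpow {z : ℂ} (h : (1 + z) ∈ Complex.slitPlane) (s : ℂ) :
    HasDerivAt (fun w : ℂ => (1 + w) ^ s) (s * (1 + z) ^ (s - 1)) z := by
  have := (HasDerivAt.cpow_const ((hasDerivAt_id z).const_add 1) h (c := s))
  simpa using this

lemma iteratedDeriv_one_add_cpow (α : ℝ) (n : ℕ) :
    ∀ z ∈ Metric.ball (0:ℂ) 1,
    iteratedDeriv n (fun w : ℂ => (1 + w) ^ (α:ℂ)) z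
      = (∏ i ∈ Finset.range n, ((α:ℂ) - i)) * (1 + z) ^ ((α:ℂ) - n) := by
  induction n with
  | zero => intro z hz; simp
  | succ n ih =>
    intro z hz
    rw [iteratedDeriv_succ]
    have hev : (iteratedDeriv n (fun w : ℂ => (1 + w) ^ (α:ℂ)))
        =ᶠ[nhds z] (fun w => (∏ i ∈ Finset.range n, ((α:ℂ) - i)) * (1 + w) ^ ((α:ℂ) - n)) := by
      filter_upwards [Metric.isOpen_ball.mem_nhds hz] with w hw
      exact ih w hw
    rw [hev.deriv_eq]
    have hd : HasDerivAt (fun w : ℂ => (∏ i ∈ Finset.range n, ((α:ℂ) - i)) * (1 + w) ^ ((α:ℂ) - n))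
        ((∏ i ∈ Finset.range n, ((α:ℂ) - i)) * (((α:ℂ) - n) * (1 + z) ^ ((α:ℂ) - n - 1))) z :=
      (hasDerivAt_one_add_cpow (slit_of_ball hz) _).const_mul _
    rw [hd.deriv, Finset.prod_range_succ]
    push_cast
    rw [show (α:ℂ) - (n+1) = (α:ℂ) - n - 1 by ring]
    ring

lemma hasSum_binomial_ball (α : ℝ) {z : ℂ} (hz : z ∈ Metric.ball (0:ℂ) 1) :
    HasSum (fun n : ℕ => ((∏ i ∈ Finset.range n, ((α:ℂ) - i)) / n.factorial) * z ^ n)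
      ((1 + z) ^ (α:ℂ)) := by
  have hdiff : DifferentiableOn ℂ (fun w : ℂ => (1 + w) ^ (α:ℂ)) (Metric.ball (0:ℂ) 1) :=
    fun w hw => ((hasDerivAt_one_add_cpow (slit_of_ball hw) _).differentiableAt).differentiableWithinAt
  have H := Complex.hasSum_taylorSeries_on_ball hdiff hz
  refine H.congr_fun fun n => ?_
  rw [iteratedDeriv_one_add_cpow α n 0 (by simp)]
  simp [smul_eq_mul]
  ring

lemma norm_coeff_eq {α : ℝ} (n : ℕ) :
    ‖(∏ i ∈ Finset.range n, ((α:ℂ) - i)) / n.factorial‖ = |grunwaldG α n| := by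
  have hc : (∏ i ∈ Finset.range n, ((α:ℂ) - i)) / n.factorial
      = (((∏ i ∈ Finset.range n, (α - i)) / n.factorial : ℝ) : ℂ) := by
    push_cast; ring
  rw [hc, Complex.norm_real, Real.norm_eq_abs, grunwaldG, abs_mul, abs_pow, abs_neg, abs_one,
    one_pow, one_mul]

lemma hasSum_binomial_boundary {α : ℝ} (hα : α ∈ Set.Ioo (0:ℝ) 1) {z : ℂ}
    (hz : ‖z‖ ≤ 1) (hz1 : z ≠ -1) :
    HasSum (fun n : ℕ => ((∏ i ∈ Finset.range n, ((α:ℂ) - i)) / n.factorial) * z ^ n)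
      ((1 + z) ^ (α:ℂ)) := by
  set C : ℕ → ℂ := fun n => (∏ i ∈ Finset.range n, ((α:ℂ) - i)) / n.factorial with hC
  set F : ℂ → ℂ := fun w => ∑' n : ℕ, C n * w ^ n with hF
  have hbound : ∀ (n : ℕ), ∀ w ∈ Metric.closedBall (0:ℂ) 1, ‖C n * w ^ n‖ ≤ |grunwaldG α n| := by
    intro n w hw
    have hw1 : ‖w‖ ≤ 1 := by simpa [Complex.dist_eq] using hw
    rw [norm_mul, norm_pow]
    calc ‖C n‖ * ‖w‖ ^ n ≤ ‖C n‖ * 1 := by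
          refine mul_le_mul_of_nonneg_left ?_ (norm_nonneg _)
          exact pow_le_one₀ (norm_nonneg _) hw1
      _ = |grunwaldG α n| := by rw [mul_one, norm_coeff_eq]
  have hsummable : ∀ w ∈ Metric.closedBall (0:ℂ) 1, Summable fun n => C n * w ^ n := by
    intro w hw
    exact Summable.of_norm_bounded (summable_abs_grunwald hα) (fun n => hbound n w hw)
  have hzc : z ∈ Metric.closedBall (0:ℂ) 1 := by simpa [Complex.dist_eq] using hz
  suffices hFz : F z = (1 + z) ^ (α:ℂ) by
    rw [← hFz]; exact (hsummable z hzc).hasSum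
  rcases lt_or_eq_of_le hz with hlt | heq
  · have := hasSum_binomial_ball α (z := z) (by simpa [Complex.dist_eq] using hlt)
    exact this.tsum_eq
  · -- boundary case via continuity
    have hcont : ContinuousOn F (Metric.closedBall (0:ℂ) 1) := by
      have hU := tendstoUniformlyOn_tsum (summable_abs_grunwald hα)
          (f := fun n w => C n * w ^ n) (s := Metric.closedBall (0:ℂ) 1)
          (fun n w hw => hbound n w hw)
      exact hU.continuousOn (Filter.Frequently.of_forall fun N => by
        refine continuousOn_finset_sum _ fun n _ => ?_
        exact (Continuous.mul continuous_const (continuous_pow n)).continuousOn)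
    have hslit : (1 + z) ∈ Complex.slitPlane := by
      rcases lt_or_ge (-1 : ℝ) z.re with h | h
      · left; simp only [Complex.add_re, Complex.one_re]; linarith
      · exfalso
        have hre : z.re ^ 2 + z.im ^ 2 ≤ 1 := by
          have := Complex.sq_norm z
          have h2 : ‖z‖ ≤ 1 := hz
          nlinarith [Complex.normSq_apply z, norm_nonneg z]
        have hre2 : z.re = -1 ∧ z.im = 0 := by constructor <;> nlinarith
        exact hz1 (Complex.ext (by simp [hre2.1]) (by simp [hre2.2]))
    have hneBot : (nhdsWithin z (Metric.ball (0:ℂ) 1)).NeBot := by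
      rw [← mem_closure_iff_nhdsWithin_neBot, closure_ball (0:ℂ) one_ne_zero]
      exact hzc
    have t1 : Filter.Tendsto F (nhdsWithin z (Metric.ball (0:ℂ) 1)) (nhds (F z)) :=
      ((hcont z hzc).mono Metric.ball_subset_closedBall)
    have t2 : Filter.Tendsto (fun w : ℂ => (1 + w) ^ (α:ℂ))
        (nhdsWithin z (Metric.ball (0:ℂ) 1)) (nhds ((1 + z) ^ (α:ℂ))) := by
      have hca : ContinuousAt (fun w : ℂ => (1 + w) ^ (α:ℂ)) z := by
        have h1 : ContinuousAt (fun w : ℂ => (1 + w)) z := by fun_prop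
        exact (continuousAt_cpow_const hslit).comp h1
      exact hca.continuousWithinAt
    have t1' : Filter.Tendsto F (nhdsWithin z (Metric.ball (0:ℂ) 1))
        (nhds ((1 + z) ^ (α:ℂ))) := by
      refine t2.congr' ?_
      filter_upwards [self_mem_nhdsWithin] with w hw
      exact ((hasSum_binomial_ball α hw).tsum_eq).symm
    exact tendsto_nhds_unique t1 t1'

lemma cpow_polar {r θ : ℝ} (hr : 0 < r) (hθ : θ ∈ Set.Ioc (-π) π) (α : ℝ) :
    ((r:ℂ) * Complex.exp ((θ:ℂ) * Complex.I)) ^ (α:ℂ)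
      = ((r ^ α : ℝ) : ℂ) * Complex.exp (((α * θ : ℝ) : ℂ) * Complex.I) := by
  set w : ℂ := (r:ℂ) * Complex.exp ((θ:ℂ) * Complex.I) with hw
  have hwne : w ≠ 0 := mul_ne_zero (by exact_mod_cast hr.ne') (Complex.exp_ne_zero _)
  have habs : ‖w‖ = r := by
    rw [hw, norm_mul, Complex.norm_real, Complex.norm_exp_ofReal_mul_I, mul_one,
      Real.norm_eq_abs, abs_of_pos hr]
  have harg : Complex.arg w = θ := by
    rw [hw, Complex.exp_mul_I, Complex.arg_real_mul _ hr]
    exact Complex.arg_cos_add_sin_mul_I hθ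
  have hlog : Complex.log w = (Real.log r : ℂ) + (θ:ℂ) * Complex.I := by
    rw [Complex.log, habs, harg]
  rw [Complex.cpow_def_of_ne_zero hwne, hlog]
  rw [show ((Real.log r : ℂ) + (θ:ℂ) * Complex.I) * (α:ℂ)
      = ((α * Real.log r : ℝ) : ℂ) + ((α * θ : ℝ) : ℂ) * Complex.I by push_cast; ring]
  rw [Complex.exp_add, ← Complex.ofReal_exp, Real.rpow_def_of_pos hr, mul_comm (Real.log r) α]

lemma one_sub_exp (x : ℝ) :
    1 - Complex.exp ((x:ℂ) * Complex.I)
      = ((2 * Real.sin (x/2) : ℝ) : ℂ) * Complex.exp ((((x - π)/2 : ℝ) : ℂ) * Complex.I) := by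
  apply Complex.ext
  · simp only [Complex.sub_re, Complex.one_re, Complex.exp_ofReal_mul_I_re,
      Complex.mul_re, Complex.ofReal_re, Complex.ofReal_im, Complex.exp_ofReal_mul_I_im,
      zero_mul, sub_zero]
    have h1 : Real.cos ((x - π)/2) = Real.sin (x/2) := by
      rw [show (x - π)/2 = x/2 - π/2 by ring, Real.cos_sub_pi_div_two]
    rw [h1]
    have h2 : Real.cos x = 1 - 2 * Real.sin (x/2) ^ 2 := by
      have h3 := Real.cos_two_mul (x/2)
      have h4 := Real.sin_sq_add_cos_sq (x/2)
      have h5 : Real.cos x = Real.cos (2*(x/2)) := congrArg Real.cos (by ring)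
      rw [h5, h3]; nlinarith
    rw [h2]; ring
  · simp only [Complex.sub_im, Complex.one_im, Complex.exp_ofReal_mul_I_im,
      Complex.mul_im, Complex.ofReal_re, Complex.ofReal_im, Complex.exp_ofReal_mul_I_re,
      zero_mul, add_zero, zero_sub]
    have h1 : Real.sin ((x - π)/2) = -Real.cos (x/2) := by
      rw [show (x - π)/2 = x/2 - π/2 by ring, Real.sin_sub_pi_div_two]
    rw [h1]
    have h2 : Real.sin x = 2 * Real.sin (x/2) * Real.cos (x/2) := by
      rw [show x = 2 * (x/2) by ring, Real.sin_two_mul]; ring_nf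
    rw [h2]; ring

lemma real_sin_add_sin (p q : ℝ) :
    Real.sin p + Real.sin q = 2 * Real.sin ((p+q)/2) * Real.cos ((p-q)/2) := by
  have s1 := Real.sin_add ((p+q)/2) ((p-q)/2)
  have s2 := Real.sin_sub ((p+q)/2) ((p-q)/2)
  rw [show (p+q)/2 + (p-q)/2 = p by ring] at s1
  rw [show (p+q)/2 - (p-q)/2 = q by ring] at s2
  linarith

lemma phi_nonneg {α : ℝ} (hα : α ∈ Set.Ioo (0:ℝ) 1) {y : ℝ} (hy : y ∈ Set.Icc 0 π) :
    0 ≤ (2+α)/2 * Real.cos (α/2 * y) + α/2 * Real.cos ((2+α)/2 * y) := by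
  obtain ⟨hα0, hα1⟩ := hα
  set a : ℝ := α/2 with ha
  set b : ℝ := (2+α)/2 with hb
  have hab : b = 1 + a := by rw [ha, hb]; ring
  set Φ : ℝ → ℝ := fun y => b * Real.cos (a * y) + a * Real.cos (b * y) with hΦ
  have hderiv : ∀ y : ℝ, HasDerivAt Φ (-(a*b) * (Real.sin (a*y) + Real.sin (b*y))) y := by
    intro y
    have i1 : HasDerivAt (fun y : ℝ => a * y) a y := by
      simpa using (hasDerivAt_id y).const_mul a
    have i2 : HasDerivAt (fun y : ℝ => b * y) b y := by
      simpa using (hasDerivAt_id y).const_mul b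
    have d1 : HasDerivAt (fun y : ℝ => Real.cos (a * y)) (-Real.sin (a*y) * a) y := i1.cos
    have d2 : HasDerivAt (fun y : ℝ => Real.cos (b * y)) (-Real.sin (b*y) * b) y := i2.cos
    have := (d1.const_mul b).add (d2.const_mul a)
    exact this.congr_deriv (by ring)
  have hanti : AntitoneOn Φ (Set.Icc 0 π) := by
    refine antitoneOn_of_deriv_nonpos (convex_Icc 0 π)
      (fun y _ => (hderiv y).continuousAt.continuousWithinAt)
      (fun y _ => (hderiv y).differentiableAt.differentiableWithinAt) ?_
    intro y hy
    rw [interior_Icc] at hy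
    rw [(hderiv y).deriv]
    have hsin : 0 ≤ Real.sin (a*y) + Real.sin (b*y) := by
      rw [real_sin_add_sin]
      have e1 : (a*y + b*y)/2 = (1 + 2*a)/2 * y := by rw [hab]; ring
      have e2 : (a*y - b*y)/2 = -(y/2) := by rw [hab]; ring
      rw [e1, e2, Real.cos_neg]
      have hs : 0 ≤ Real.sin ((1 + 2*a)/2 * y) := by
        refine Real.sin_nonneg_of_nonneg_of_le_pi
          (mul_nonneg (by rw [ha]; linarith) hy.1.le) ?_
        have : (1 + 2*a)/2 ≤ 1 := by rw [ha]; linarith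
        nlinarith [hy.2, hy.1]
      have hc : 0 ≤ Real.cos (y/2) := by
        refine Real.cos_nonneg_of_mem_Icc ⟨by linarith [hy.1, Real.pi_pos], by linarith [hy.2]⟩
      positivity
    have hpos : 0 < a * b := by rw [ha, hb]; positivity
    nlinarith
  have hΦπ : Φ π = Real.cos (a * π) := by
    rw [hΦ]
    simp only
    rw [hab, show (1 + a) * π = a * π + π by ring, Real.cos_add_pi]
    ring
  have hπnn : 0 ≤ Real.cos (a * π) := by
    have hπ := Real.pi_pos
    refine Real.cos_nonneg_of_mem_Icc ⟨by nlinarith, by nlinarith⟩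
  have hmono := hanti hy (Set.right_mem_Icc.mpr Real.pi_pos.le) hy.2
  rw [hΦπ] at hmono
  exact le_trans hπnn hmono

/-- Weighted coefficients `λ_k^{(α)}`. -/
noncomputable def lamG (α : ℝ) : ℕ → ℝ
  | 0 => (2 + α) / 2 * grunwaldG α 0
  | k + 1 => (2 + α) / 2 * grunwaldG α (k + 1) - α / 2 * grunwaldG α k

lemma lamG_zero (α : ℝ) : lamG α 0 = (2 + α) / 2 := by
  simp [lamG, grunwaldG_zero]

lemma bracket_nonneg {α : ℝ} (hα : α ∈ Set.Ioo (0:ℝ) 1) {x : ℝ} (hx : x ∈ Set.Icc 0 π) :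
    0 ≤ (2 + α) / 2 * Real.cos (α / 2 * (π - x)) - α / 2 * Real.cos (α / 2 * (π - x) - x) := by
  have hy : π - x ∈ Set.Icc 0 π := ⟨by linarith [hx.2], by linarith [hx.1]⟩
  have h := phi_nonneg hα hy
  have e1 : α / 2 * (π - x) - x = (2 + α) / 2 * (π - x) - π := by ring
  rw [e1, Real.cos_sub_pi]
  linarith

lemma main_hasSum {α : ℝ} (hα : α ∈ Set.Ioo (0:ℝ) 1) {x : ℝ} (hx0 : 0 < x) (hxπ : x ≤ π) :
    HasSum (fun k : ℕ => lamG α (k + 1) * Real.cos ((k + 1 : ℕ) * x))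
      ((2 * Real.sin (x / 2)) ^ α *
          ((2 + α) / 2 * Real.cos (α / 2 * (π - x)) - α / 2 * Real.cos (α / 2 * (π - x) - x))
        - (2 + α) / 2) := by
  have hπ := Real.pi_pos
  set e : ℂ := Complex.exp ((x:ℂ) * Complex.I) with he
  set ρ : ℝ := 2 * Real.sin (x/2) with hρdef
  have hρ : 0 < ρ := by
    have : 0 < Real.sin (x/2) := Real.sin_pos_of_pos_of_lt_pi (by linarith) (by linarith)
    rw [hρdef]; linarith
  set θ : ℝ := (x - π)/2 with hθdef
  have hθ : θ ∈ Set.Ioc (-π) π := ⟨by rw [hθdef]; linarith, by rw [hθdef]; linarith⟩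
  have hfact : 1 - e = ((ρ:ℝ):ℂ) * Complex.exp (((θ:ℝ):ℂ) * Complex.I) := one_sub_exp x
  set G : ℂ := (1 - e) ^ (α:ℂ) with hGdef
  have hG : G = ((ρ^α : ℝ):ℂ) * Complex.exp (((α * θ : ℝ):ℂ) * Complex.I) := by
    rw [hGdef, hfact, cpow_polar hρ hθ α]
  have hz1 : -e ≠ -1 := by
    intro h
    have he1 : e = 1 := by
      have := neg_injective h; exact this
    have : (1:ℂ) - e = 0 := by rw [he1]; ring
    rw [hfact] at this
    exact (mul_ne_zero (by exact_mod_cast hρ.ne') (Complex.exp_ne_zero _)) this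
  have hznorm : ‖-e‖ ≤ 1 := by
    rw [norm_neg, he, Complex.norm_exp_ofReal_mul_I]
  have H1 := hasSum_binomial_boundary hα hznorm hz1
  rw [show (1:ℂ) + -e = 1 - e from by ring] at H1
  have H1' : HasSum (fun n : ℕ => ((grunwaldG α n : ℝ):ℂ) * e^n) G := by
    refine H1.congr_fun fun n => ?_
    rw [grunwaldG_cast, neg_pow]
    ring
  have H2 : HasSum (fun k : ℕ => ((grunwaldG α (k+1) : ℝ):ℂ) * e^(k+1)) (G - 1) := by
    have := (hasSum_nat_add_iff' (f := fun n => ((grunwaldG α n : ℝ):ℂ) * e^n) 1).2 H1'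
    simpa [grunwaldG_zero] using this
  have H3 : HasSum (fun k : ℕ => ((grunwaldG α k : ℝ):ℂ) * e^(k+1)) (e * G) := by
    refine (H1'.mul_left e).congr_fun fun n => ?_
    rw [pow_succ]; ring
  have H4 : HasSum (fun k : ℕ => ((lamG α (k+1) : ℝ):ℂ) * e^(k+1))
      ((((2+α)/2 : ℝ):ℂ) * (G - 1) - ((α/2 : ℝ):ℂ) * (e * G)) := by
    refine ((H2.mul_left (((2+α)/2 : ℝ):ℂ)).sub (H3.mul_left ((α/2 : ℝ):ℂ))).congr_fun
      fun n => ?_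
    simp only [lamG]
    push_cast
    ring
  have H5 := H4.mapL Complex.reCLM
  have heG : e * G = ((ρ^α : ℝ):ℂ) * Complex.exp (((x + α * θ : ℝ):ℂ) * Complex.I) := by
    rw [hG, he, ← mul_assoc, mul_comm (Complex.exp ((x:ℂ) * Complex.I)) _, mul_assoc,
      ← Complex.exp_add]
    congr 2
    push_cast; ring
  have hre : (Complex.reCLM ((((2+α)/2 : ℝ):ℂ) * (G - 1) - ((α/2 : ℝ):ℂ) * (e * G)))
      = (2 * Real.sin (x / 2)) ^ α *
          ((2 + α) / 2 * Real.cos (α / 2 * (π - x)) - α / 2 * Real.cos (α / 2 * (π - x) - x))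
        - (2 + α) / 2 := by
    rw [heG, hG]
    simp only [Complex.reCLM_apply, Complex.sub_re, Complex.mul_re, Complex.ofReal_re,
      Complex.ofReal_im, Complex.exp_ofReal_mul_I_re, Complex.exp_ofReal_mul_I_im,
      Complex.one_re, Complex.one_im, zero_mul, sub_zero, mul_zero]
    have c1 : Real.cos (α * θ) = Real.cos (α / 2 * (π - x)) := by
      rw [show α * θ = -(α / 2 * (π - x)) from by rw [hθdef]; ring, Real.cos_neg]
    have c2 : Real.cos (x + α * θ) = Real.cos (α / 2 * (π - x) - x) := by
      rw [show x + α * θ = -(α / 2 * (π - x) - x) from by rw [hθdef]; ring, Real.cos_neg]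
    rw [c1, c2, hρdef]
    ring
  rw [hre] at H5
  refine H5.congr_fun fun k => ?_
  simp only [Complex.reCLM_apply]
  have hek : e^(k+1) = Complex.exp (((((k+1:ℕ) : ℝ) * x : ℝ):ℂ) * Complex.I) := by
    rw [he, ← Complex.exp_nat_mul]
    congr 1
    push_cast; ring
  rw [hek]
  simp only [Complex.mul_re, Complex.ofReal_re, Complex.ofReal_im,
    Complex.exp_ofReal_mul_I_re, Complex.exp_ofReal_mul_I_im, zero_mul, sub_zero]

theorem generating_function_nonneg (α : ℝ) (hα : α ∈ Set.Ioo (0 : ℝ) 1)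
    (x : ℝ) (hx : x ∈ Set.Icc 0 π) :
    lamG α 0 + ∑' k : ℕ, lamG α (k + 1) * Real.cos ((k + 1 : ℕ) * x)
      = (2 * Real.sin (x / 2)) ^ α *
          ((2 + α) / 2 * Real.cos (α / 2 * (π - x)) - α / 2 * Real.cos (α / 2 * (π - x) - x)) ∧
    0 ≤ lamG α 0 + ∑' k : ℕ, lamG α (k + 1) * Real.cos ((k + 1 : ℕ) * x) := by
  rcases eq_or_lt_of_le hx.1 with h0 | h0
  · -- x = 0
    subst h0
    have Hg := hasSum_grunwald_succ hα
    have Hg0 : HasSum (fun k : ℕ => grunwaldG α k) 0 := by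
      refine (hasSum_nat_add_iff' 1).1 ?_
      simpa [Finset.sum_range_one, grunwaldG_zero] using Hg
    have Hlam : HasSum (fun k : ℕ => lamG α (k+1) * Real.cos ((k + 1 : ℕ) * (0:ℝ)))
        (-((2+α)/2)) := by
      rw [show -((2+α)/2) = (2+α)/2 * (-1) - α/2 * 0 from by ring]
      refine ((Hg.mul_left ((2+α)/2)).sub (Hg0.mul_left (α/2))).congr_fun fun k => ?_
      simp [lamG]
    rw [Hlam.tsum_eq, lamG_zero]
    constructor
    · rw [show (0:ℝ)/2 = 0 from by norm_num, Real.sin_zero, mul_zero,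
        Real.zero_rpow hα.1.ne']
      ring
    · linarith
  · have H := main_hasSum hα h0 hx.2
    have hts := H.tsum_eq
    rw [lamG_zero, hts]
    constructor
    · ring
    · have hb := bracket_nonneg hα hx
      have hρ : (0:ℝ) ≤ (2 * Real.sin (x / 2)) ^ α := Real.rpow_nonneg (by
        have : 0 ≤ Real.sin (x/2) := Real.sin_nonneg_of_nonneg_of_le_pi (by linarith [hx.1])
          (by linarith [hx.2, Real.pi_pos])
        linarith) α
      nlinarith
end

section
/- For α ∈ (0,1) and x ∈ (0, π], the function g(α,x) = (1 − α/2)·cos((α/2)(π − x)) + (α/2)·cos(x + (α/2)(π − x)) satisfies ∂g/∂α (α,x) = −sin(x/2)·sin(x/2 + (α/2)(π − x)) − (1 − α/2)·sin((α/2)(π − x))·(π − x)/2 − (α/2)·sin(x + (α/2)(π − x))·(π − x)/2 ≤ 0. -/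
open Real

theorem g_deriv_alpha_nonpos (α : ℝ) (hα : α ∈ Set.Ioo (0 : ℝ) 1)
    (x : ℝ) (hx : x ∈ Set.Ioc 0 π) :
    HasDerivAt
      (fun a : ℝ =>
        (1 - a / 2) * Real.cos (a / 2 * (π - x)) + a / 2 * Real.cos (x + a / 2 * (π - x)))
      (-(Real.sin (x / 2) * Real.sin (x / 2 + α / 2 * (π - x)))
        - (1 - α / 2) * Real.sin (α / 2 * (π - x)) * ((π - x) / 2)
        - α / 2 * Real.sin (x + α / 2 * (π - x)) * ((π - x) / 2)) α ∧
    (-(Real.sin (x / 2) * Real.sin (x / 2 + α / 2 * (π - x)))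
        - (1 - α / 2) * Real.sin (α / 2 * (π - x)) * ((π - x) / 2)
        - α / 2 * Real.sin (x + α / 2 * (π - x)) * ((π - x) / 2)) ≤ 0 := by
  obtain ⟨hα0, hα1⟩ := hα
  obtain ⟨hx0, hxπ⟩ := hx
  constructor
  · have hinner : HasDerivAt (fun a : ℝ => a / 2 * (π - x)) ((π - x) / 2) α := by
      have := ((hasDerivAt_id α).div_const 2).mul_const (π - x)
      exact this.congr_deriv (by ring)
    have hinner2 : HasDerivAt (fun a : ℝ => x + a / 2 * (π - x)) ((π - x) / 2) α := by
      simpa using (hinner.const_add x)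
    have h1 : HasDerivAt (fun a : ℝ => (1 - a / 2) * Real.cos (a / 2 * (π - x)))
        ((0 - 1 / 2) * Real.cos (α / 2 * (π - x))
          + (1 - α / 2) * (-Real.sin (α / 2 * (π - x)) * ((π - x) / 2))) α := by
      exact (((hasDerivAt_const α (1:ℝ)).sub ((hasDerivAt_id α).div_const 2)).mul hinner.cos)
    have h2 : HasDerivAt (fun a : ℝ => a / 2 * Real.cos (x + a / 2 * (π - x)))
        ((1 / 2) * Real.cos (x + α / 2 * (π - x))
          + α / 2 * (-Real.sin (x + α / 2 * (π - x)) * ((π - x) / 2))) α := by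
      exact (((hasDerivAt_id α).div_const 2).mul hinner2.cos).congr_deriv (by simp only [id])
    have := h1.add h2
    refine this.congr_deriv ?_
    have hcc : Real.cos (x + α / 2 * (π - x)) - Real.cos (α / 2 * (π - x))
        = -2 * Real.sin (x / 2 + α / 2 * (π - x)) * Real.sin (x / 2) := by
      have := Real.cos_sub_cos (x + α / 2 * (π - x)) (α / 2 * (π - x))
      convert this using 3 <;> ring
    nlinarith [hcc]
  · have hπx : 0 ≤ π - x := by linarith
    have hθ0 : 0 ≤ α / 2 * (π - x) := by positivity
    have hθπ : α / 2 * (π - x) ≤ π := by nlinarith [Real.pi_pos]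
    have s1 : 0 ≤ Real.sin (x / 2) :=
      Real.sin_nonneg_of_nonneg_of_le_pi (by linarith) (by linarith [Real.pi_pos])
    have s2 : 0 ≤ Real.sin (x / 2 + α / 2 * (π - x)) :=
      Real.sin_nonneg_of_nonneg_of_le_pi (by linarith) (by nlinarith)
    have s3 : 0 ≤ Real.sin (α / 2 * (π - x)) :=
      Real.sin_nonneg_of_nonneg_of_le_pi hθ0 hθπ
    have s4 : 0 ≤ Real.sin (x + α / 2 * (π - x)) :=
      Real.sin_nonneg_of_nonneg_of_le_pi (by linarith) (by nlinarith)
    nlinarith [mul_nonneg s1 s2, mul_nonneg (mul_nonneg (by linarith : (0:ℝ) ≤ 1 - α / 2) s3) (by linarith : (0:ℝ) ≤ (π - x) / 2), mul_nonneg (mul_nonneg (by positivity : (0:ℝ) ≤ α / 2) s4) (by linarith : (0:ℝ) ≤ (π - x) / 2)]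
end

section
/- For α ∈ (0,1) and all x ∈ (0, π], the function g(α,x) = (1 − α/2)·cos((α/2)(π − x)) + (α/2)·cos(x + (α/2)(π − x)) satisfies g(α,x) ≥ g(1,x) = 0, hence g(α,x) ≥ 0. -/
open Real

theorem g_nonneg (α : ℝ) (hα : α ∈ Set.Ioo (0 : ℝ) 1)
    (x : ℝ) (hx : x ∈ Set.Ioc 0 π) :
    ((1 : ℝ) - 1 / 2) * Real.cos ((1 : ℝ) / 2 * (π - x))
        + (1 : ℝ) / 2 * Real.cos (x + (1 : ℝ) / 2 * (π - x)) = 0 ∧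
    ((1 : ℝ) - 1 / 2) * Real.cos ((1 : ℝ) / 2 * (π - x))
        + (1 : ℝ) / 2 * Real.cos (x + (1 : ℝ) / 2 * (π - x)) ≤
      (1 - α / 2) * Real.cos (α / 2 * (π - x)) + α / 2 * Real.cos (x + α / 2 * (π - x)) ∧
    0 ≤ (1 - α / 2) * Real.cos (α / 2 * (π - x)) + α / 2 * Real.cos (x + α / 2 * (π - x)) := by
  obtain ⟨hα0, hα1⟩ := hα
  obtain ⟨hx0, hxπ⟩ := hx
  have hzero : ((1 : ℝ) - 1 / 2) * Real.cos ((1 : ℝ) / 2 * (π - x))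
      + (1 : ℝ) / 2 * Real.cos (x + (1 : ℝ) / 2 * (π - x)) = 0 := by
    rw [show (1 : ℝ) / 2 * (π - x) = π / 2 - x / 2 by ring,
      show x + (π / 2 - x / 2) = π / 2 + x / 2 by ring,
      Real.cos_pi_div_two_sub, Real.cos_add, Real.cos_pi_div_two, Real.sin_pi_div_two]
    ring
  set θ := α / 2 * (π - x) with hθdef
  have hπx : 0 ≤ π - x := by linarith
  have hθ0 : 0 ≤ θ := by positivity
  have hθle : θ + x / 2 ≤ π / 2 := by
    have : θ ≤ 1 / 2 * (π - x) := by nlinarith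
    linarith
  have hCnn : 0 ≤ Real.cos θ := by
    apply Real.cos_nonneg_of_mem_Icc
    constructor <;> [linarith [Real.pi_pos]; linarith]
  have hSnn : 0 ≤ Real.sin θ := Real.sin_nonneg_of_nonneg_of_le_pi hθ0 (by linarith [Real.pi_pos])
  have hcnn : 0 ≤ Real.cos (x / 2) := by
    apply Real.cos_nonneg_of_mem_Icc
    constructor <;> [linarith [Real.pi_pos]; linarith]
  have hsnn : 0 ≤ Real.sin (x / 2) := Real.sin_nonneg_of_nonneg_of_le_pi (by linarith) (by linarith)
  have hc : 0 ≤ Real.cos (θ + x / 2) := by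
    apply Real.cos_nonneg_of_mem_Icc
    constructor <;> [linarith [Real.pi_pos]; linarith]
  rw [Real.cos_add] at hc
  have hcx : Real.cos x = 2 * Real.cos (x / 2) ^ 2 - 1 := by
    rw [show x = 2 * (x / 2) by ring, Real.cos_two_mul]
    ring_nf
  have hsx : Real.sin x = 2 * Real.sin (x / 2) * Real.cos (x / 2) := by
    rw [show x = 2 * (x / 2) by ring, Real.sin_two_mul]
    ring_nf
  have hpyth : Real.sin (x / 2) ^ 2 + Real.cos (x / 2) ^ 2 = 1 := Real.sin_sq_add_cos_sq _
  have hg : 0 ≤ (1 - α / 2) * Real.cos θ + α / 2 * Real.cos (x + θ) := by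
    rw [show x + θ = θ + x + 0 by ring, add_zero, Real.cos_add, hcx, hsx]
    nlinarith [mul_nonneg (mul_nonneg hα0.le hcnn) hc,
      mul_nonneg hCnn (by linarith : (0:ℝ) ≤ 1 - α)]
  exact ⟨hzero, by linarith, hg⟩
end

section
/- (Fourth-order compact identity) If f ∈ C⁶[x_{i−1}, x_{i+1}] with x_{i±1} = x_i ± h, then (1/12)[f''(x_{i−1}) + 10 f''(x_i) + f''(x_{i+1})] = (1/h²)[f(x_{i−1}) − 2f(x_i) + f(x_{i+1})] + (h⁴/360) ∫₀¹ [f⁽⁶⁾(x_i − sh) + f⁽⁶⁾(x_i + sh)] ζ(s) ds, where ζ(s) = (1−s)³[5 − 3(1−s)²]. -/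
open Set MeasureTheory intervalIntegral
open scoped Nat

private lemma iter_subst (G : ℝ → ℝ) (x h : ℝ) (hh : h ≠ 0) :
    ∫ t in x..x+h, G t = h * ∫ s in (0:ℝ)..1, G (x + s*h) := by
  have key := intervalIntegral.smul_integral_comp_mul_add (a := (0:ℝ)) (b := 1) G h x
  rw [show h*(0:ℝ)+x = x from by ring, show h*(1:ℝ)+x = x+h from by ring] at key
  rw [← key, smul_eq_mul]
  congr 1
  apply intervalIntegral.integral_congr
  intro s _
  simp only [show ∀ s : ℝ, x + s*h = h*s + x from fun s => by ring]

private lemma iter_subst' (G : ℝ → ℝ) (x h : ℝ) (hh : h ≠ 0) :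
    ∫ t in x..x-h, G t = -h * ∫ s in (0:ℝ)..1, G (x - s*h) := by
  have key := iter_subst G x (-h) (neg_ne_zero.2 hh)
  rw [show x + -h = x - h from by ring] at key
  rw [key]
  congr 1
  apply intervalIntegral.integral_congr
  intro s _
  simp only [show ∀ s : ℝ, x + s*(-h) = x - s*h from fun s => by ring]

private lemma taylor_int {f : ℝ → ℝ} {a b : ℝ} (hab : a < b) (n : ℕ)
    (hf : ContDiffOn ℝ (n+1 : ℕ) f (Set.Icc a b)) {c d : ℝ}
    (hsub : Set.uIcc d c ⊆ Set.Icc a b)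
    (hoo : Set.Ioo (min d c) (max d c) ⊆ Set.Ioo a b) :
    ∫ t in d..c, ((n ! : ℝ)⁻¹ * (c - t)^n) * iteratedDerivWithin (n+1) f (Set.Icc a b) t
      = f c - taylorWithinEval f n (Set.Icc a b) d c := by
  have hs : UniqueDiffOn ℝ (Icc a b) := uniqueDiffOn_Icc hab
  have hfn : ContDiffOn ℝ n f (Icc a b) := hf.of_succ
  have hf' : DifferentiableOn ℝ (iteratedDerivWithin n f (Icc a b)) (Ioo a b) :=
    (hf.differentiableOn_iteratedDerivWithin (by exact_mod_cast Nat.lt_succ_self n) hs).mono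
      Ioo_subset_Icc_self
  have hcont : ContinuousOn (fun t => taylorWithinEval f n (Icc a b) t c) (uIcc d c) :=
    (continuousOn_taylorWithinEval hs hfn).mono hsub
  have hderiv : ∀ t ∈ Ioo (min d c) (max d c),
      HasDerivWithinAt (fun y => taylorWithinEval f n (Icc a b) y c)
        (((n ! : ℝ)⁻¹ * (c - t)^n) • iteratedDerivWithin (n+1) f (Icc a b) t) (Ioi t) t :=
    fun t ht => (taylorWithinEval_hasDerivAt_Ioo c hab (hoo ht) hfn hf').hasDerivWithinAt
  have hint : IntervalIntegrable
      (fun t => ((n ! : ℝ)⁻¹ * (c - t)^n) • iteratedDerivWithin (n+1) f (Icc a b) t)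
      volume d c := by
    apply ContinuousOn.intervalIntegrable
    simp only [smul_eq_mul]
    exact (continuousOn_const.mul ((continuousOn_const.sub continuousOn_id).pow _)).mul
      ((hf.continuousOn_iteratedDerivWithin le_rfl hs).mono hsub)
  have H := intervalIntegral.integral_eq_sub_of_hasDeriv_right hcont hderiv hint
  rw [taylorWithinEval_self] at H
  simpa [smul_eq_mul] using H

private lemma cdo4 {f : ℝ → ℝ} {a b : ℝ} (hab : a < b)
    (hf : ContDiffOn ℝ 6 f (Set.Icc a b)) :
    ContDiffOn ℝ ((3:ℕ)+1) (iteratedDerivWithin 2 f (Set.Icc a b)) (Set.Icc a b) := by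
  have hs : UniqueDiffOn ℝ (Icc a b) := uniqueDiffOn_Icc hab
  have h1 : ContDiffOn ℝ 5 (derivWithin f (Icc a b)) (Icc a b) :=
    hf.derivWithin hs (by norm_num)
  have h2 : ContDiffOn ℝ 4 (derivWithin (derivWithin f (Icc a b)) (Icc a b)) (Icc a b) :=
    h1.derivWithin hs (by norm_num)
  have h4 : ContDiffOn ℝ ((3:ℕ)+1) (derivWithin (derivWithin f (Icc a b)) (Icc a b)) (Icc a b) := by
    exact_mod_cast h2
  apply h4.congr
  intro t ht
  rw [show (2:ℕ) = 1+1 from rfl, iteratedDerivWithin_succ]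
  exact derivWithin_congr (fun y hy => congrFun iteratedDerivWithin_one y)
    (congrFun iteratedDerivWithin_one t)

private lemma iter_shift {f : ℝ → ℝ} {a b : ℝ} (hab : a < b) (k : ℕ) {t : ℝ}
    (ht : t ∈ Set.Icc a b) :
    iteratedDerivWithin k (iteratedDerivWithin 2 f (Set.Icc a b)) (Set.Icc a b) t
      = iteratedDerivWithin (k+2) f (Set.Icc a b) t := by
  have hs : UniqueDiffOn ℝ (Icc a b) := uniqueDiffOn_Icc hab
  have e1 : Set.EqOn (iteratedDerivWithin 2 f (Icc a b))
      (derivWithin (derivWithin f (Icc a b)) (Icc a b)) (Icc a b) := by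
    intro y hy
    rw [show (2:ℕ) = 1+1 from rfl, iteratedDerivWithin_succ]
    exact derivWithin_congr (fun z hz => congrFun iteratedDerivWithin_one z)
      (congrFun iteratedDerivWithin_one y)
  rw [iteratedDerivWithin_congr e1 ht,
    show k+2 = (k+1)+1 from rfl, iteratedDerivWithin_succ', iteratedDerivWithin_succ']
theorem compact_fourth_order_identity (f : ℝ → ℝ) (x h : ℝ) (hh : 0 < h)
    (hf : ContDiffOn ℝ 6 f (Set.Icc (x - h) (x + h))) :
    (1 / 12) * (iteratedDerivWithin 2 f (Set.Icc (x - h) (x + h)) (x - h)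
        + 10 * iteratedDerivWithin 2 f (Set.Icc (x - h) (x + h)) x
        + iteratedDerivWithin 2 f (Set.Icc (x - h) (x + h)) (x + h))
      = (1 / h ^ 2) * (f (x - h) - 2 * f x + f (x + h))
        + (h ^ 4 / 360) *
          ∫ s in (0 : ℝ)..1,
            (iteratedDerivWithin 6 f (Set.Icc (x - h) (x + h)) (x - s * h)
              + iteratedDerivWithin 6 f (Set.Icc (x - h) (x + h)) (x + s * h)) *
            ((1 - s) ^ 3 * (5 - 3 * (1 - s) ^ 2)) := by
  have hab : x - h < x + h := by linarith
  have hne : h ≠ 0 := ne_of_gt hh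
  have hs : UniqueDiffOn ℝ (Set.Icc (x-h) (x+h)) := uniqueDiffOn_Icc hab
  have hx : x ∈ Set.Icc (x-h) (x+h) := by constructor <;> linarith
  have hf6 : ContDiffOn ℝ ((5:ℕ)+1) f (Set.Icc (x-h) (x+h)) := by exact_mod_cast hf
  have hf2 := cdo4 hab hf
  have hsubP : Set.uIcc x (x+h) ⊆ Set.Icc (x-h) (x+h) := by
    rw [Set.uIcc_of_le (by linarith : x ≤ x+h)]
    exact Set.Icc_subset_Icc (by linarith) le_rfl
  have hsubM : Set.uIcc x (x-h) ⊆ Set.Icc (x-h) (x+h) := by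
    rw [Set.uIcc_of_ge (by linarith : x-h ≤ x)]
    exact Set.Icc_subset_Icc le_rfl (by linarith)
  have hooP : Set.Ioo (min x (x+h)) (max x (x+h)) ⊆ Set.Ioo (x-h) (x+h) := by
    rw [min_eq_left (by linarith), max_eq_right (by linarith)]
    exact Set.Ioo_subset_Ioo (by linarith) le_rfl
  have hooM : Set.Ioo (min x (x-h)) (max x (x-h)) ⊆ Set.Ioo (x-h) (x+h) := by
    rw [min_eq_right (by linarith), max_eq_left (by linarith)]
    exact Set.Ioo_subset_Ioo le_rfl (by linarith)
  -- the four Taylor expansions with integral remainder, in s-variable form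
  have E5p : f (x+h) - taylorWithinEval f 5 (Set.Icc (x-h) (x+h)) x (x+h)
      = h^6/120 * ∫ s in (0:ℝ)..1,
          iteratedDerivWithin 6 f (Set.Icc (x-h) (x+h)) (x + s*h) * (1-s)^5 := by
    calc f (x+h) - taylorWithinEval f 5 (Set.Icc (x-h) (x+h)) x (x+h)
        = ∫ t in x..x+h, ((5 ! : ℝ)⁻¹ * (x+h-t)^5) *
            iteratedDerivWithin 6 f (Set.Icc (x-h) (x+h)) t :=
          (taylor_int hab 5 hf6 hsubP hooP).symm
      _ = h * ∫ s in (0:ℝ)..1, ((5 ! : ℝ)⁻¹ * (x+h-(x+s*h))^5) *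
            iteratedDerivWithin 6 f (Set.Icc (x-h) (x+h)) (x+s*h) := iter_subst _ x h hne
      _ = h * ∫ s in (0:ℝ)..1, h^5/120 *
            (iteratedDerivWithin 6 f (Set.Icc (x-h) (x+h)) (x+s*h) * (1-s)^5) := by
          congr 1
          apply intervalIntegral.integral_congr
          intro s _
          norm_num [Nat.factorial]; ring
      _ = h^6/120 * ∫ s in (0:ℝ)..1,
            iteratedDerivWithin 6 f (Set.Icc (x-h) (x+h)) (x+s*h) * (1-s)^5 := by
          rw [intervalIntegral.integral_const_mul]; ring
  have E5m : f (x-h) - taylorWithinEval f 5 (Set.Icc (x-h) (x+h)) x (x-h)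
      = h^6/120 * ∫ s in (0:ℝ)..1,
          iteratedDerivWithin 6 f (Set.Icc (x-h) (x+h)) (x - s*h) * (1-s)^5 := by
    calc f (x-h) - taylorWithinEval f 5 (Set.Icc (x-h) (x+h)) x (x-h)
        = ∫ t in x..x-h, ((5 ! : ℝ)⁻¹ * (x-h-t)^5) *
            iteratedDerivWithin 6 f (Set.Icc (x-h) (x+h)) t :=
          (taylor_int hab 5 hf6 hsubM hooM).symm
      _ = -h * ∫ s in (0:ℝ)..1, ((5 ! : ℝ)⁻¹ * (x-h-(x-s*h))^5) *
            iteratedDerivWithin 6 f (Set.Icc (x-h) (x+h)) (x-s*h) := iter_subst' _ x h hne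
      _ = -h * ∫ s in (0:ℝ)..1, -(h^5/120) *
            (iteratedDerivWithin 6 f (Set.Icc (x-h) (x+h)) (x-s*h) * (1-s)^5) := by
          congr 1
          apply intervalIntegral.integral_congr
          intro s _
          norm_num [Nat.factorial]; ring
      _ = h^6/120 * ∫ s in (0:ℝ)..1,
            iteratedDerivWithin 6 f (Set.Icc (x-h) (x+h)) (x-s*h) * (1-s)^5 := by
          rw [intervalIntegral.integral_const_mul]; ring
  have E3p : iteratedDerivWithin 2 f (Set.Icc (x-h) (x+h)) (x+h)
        - taylorWithinEval (iteratedDerivWithin 2 f (Set.Icc (x-h) (x+h))) 3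
            (Set.Icc (x-h) (x+h)) x (x+h)
      = h^4/6 * ∫ s in (0:ℝ)..1,
          iteratedDerivWithin 6 f (Set.Icc (x-h) (x+h)) (x + s*h) * (1-s)^3 := by
    calc iteratedDerivWithin 2 f (Set.Icc (x-h) (x+h)) (x+h)
          - taylorWithinEval (iteratedDerivWithin 2 f (Set.Icc (x-h) (x+h))) 3
              (Set.Icc (x-h) (x+h)) x (x+h)
        = ∫ t in x..x+h, ((3 ! : ℝ)⁻¹ * (x+h-t)^3) *
            iteratedDerivWithin 4 (iteratedDerivWithin 2 f (Set.Icc (x-h) (x+h)))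
              (Set.Icc (x-h) (x+h)) t :=
          (taylor_int hab 3 hf2 hsubP hooP).symm
      _ = ∫ t in x..x+h, ((3 ! : ℝ)⁻¹ * (x+h-t)^3) *
            iteratedDerivWithin 6 f (Set.Icc (x-h) (x+h)) t := by
          apply intervalIntegral.integral_congr
          intro t ht
          beta_reduce
          rw [iter_shift hab 4 (hsubP ht)]
      _ = h * ∫ s in (0:ℝ)..1, ((3 ! : ℝ)⁻¹ * (x+h-(x+s*h))^3) *
            iteratedDerivWithin 6 f (Set.Icc (x-h) (x+h)) (x+s*h) := iter_subst _ x h hne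
      _ = h * ∫ s in (0:ℝ)..1, h^3/6 *
            (iteratedDerivWithin 6 f (Set.Icc (x-h) (x+h)) (x+s*h) * (1-s)^3) := by
          congr 1
          apply intervalIntegral.integral_congr
          intro s _
          norm_num [Nat.factorial]; ring
      _ = h^4/6 * ∫ s in (0:ℝ)..1,
            iteratedDerivWithin 6 f (Set.Icc (x-h) (x+h)) (x+s*h) * (1-s)^3 := by
          rw [intervalIntegral.integral_const_mul]; ring
  have E3m : iteratedDerivWithin 2 f (Set.Icc (x-h) (x+h)) (x-h)
        - taylorWithinEval (iteratedDerivWithin 2 f (Set.Icc (x-h) (x+h))) 3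
            (Set.Icc (x-h) (x+h)) x (x-h)
      = h^4/6 * ∫ s in (0:ℝ)..1,
          iteratedDerivWithin 6 f (Set.Icc (x-h) (x+h)) (x - s*h) * (1-s)^3 := by
    calc iteratedDerivWithin 2 f (Set.Icc (x-h) (x+h)) (x-h)
          - taylorWithinEval (iteratedDerivWithin 2 f (Set.Icc (x-h) (x+h))) 3
              (Set.Icc (x-h) (x+h)) x (x-h)
        = ∫ t in x..x-h, ((3 ! : ℝ)⁻¹ * (x-h-t)^3) *
            iteratedDerivWithin 4 (iteratedDerivWithin 2 f (Set.Icc (x-h) (x+h)))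
              (Set.Icc (x-h) (x+h)) t :=
          (taylor_int hab 3 hf2 hsubM hooM).symm
      _ = ∫ t in x..x-h, ((3 ! : ℝ)⁻¹ * (x-h-t)^3) *
            iteratedDerivWithin 6 f (Set.Icc (x-h) (x+h)) t := by
          apply intervalIntegral.integral_congr
          intro t ht
          beta_reduce
          rw [iter_shift hab 4 (hsubM ht)]
      _ = -h * ∫ s in (0:ℝ)..1, ((3 ! : ℝ)⁻¹ * (x-h-(x-s*h))^3) *
            iteratedDerivWithin 6 f (Set.Icc (x-h) (x+h)) (x-s*h) := iter_subst' _ x h hne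
      _ = -h * ∫ s in (0:ℝ)..1, -(h^3/6) *
            (iteratedDerivWithin 6 f (Set.Icc (x-h) (x+h)) (x-s*h) * (1-s)^3) := by
          congr 1
          apply intervalIntegral.integral_congr
          intro s _
          norm_num [Nat.factorial]; ring
      _ = h^4/6 * ∫ s in (0:ℝ)..1,
            iteratedDerivWithin 6 f (Set.Icc (x-h) (x+h)) (x-s*h) * (1-s)^3 := by
          rw [intervalIntegral.integral_const_mul]; ring
  -- expand Taylor polynomials and shift iterated derivatives of the second derivative
  simp only [taylor_within_apply, Finset.sum_range_succ, Finset.sum_range_zero, smul_eq_mul,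
    iteratedDerivWithin_zero] at E5p E5m E3p E3m
  rw [iter_shift hab 1 hx, iter_shift hab 2 hx, iter_shift hab 3 hx] at E3p E3m
  norm_num [Nat.factorial] at E5p E5m E3p E3m
  have hD6c : ContinuousOn (iteratedDerivWithin 6 f (Set.Icc (x-h) (x+h)))
      (Set.Icc (x-h) (x+h)) :=
    hf.continuousOn_iteratedDerivWithin (by exact_mod_cast le_rfl) hs
  have hmemP : ∀ s ∈ Set.uIcc (0:ℝ) 1, x + s*h ∈ Set.Icc (x-h) (x+h) := by
    intro s hsm
    rw [Set.uIcc_of_le zero_le_one] at hsm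
    obtain ⟨h0, h1⟩ := hsm
    constructor <;> nlinarith
  have hmemM : ∀ s ∈ Set.uIcc (0:ℝ) 1, x - s*h ∈ Set.Icc (x-h) (x+h) := by
    intro s hsm
    rw [Set.uIcc_of_le zero_le_one] at hsm
    obtain ⟨h0, h1⟩ := hsm
    constructor <;> nlinarith
  have hcP : ContinuousOn (fun s => iteratedDerivWithin 6 f (Set.Icc (x-h) (x+h)) (x + s*h))
      (Set.uIcc (0:ℝ) 1) := hD6c.comp (by fun_prop) hmemP
  have hcM : ContinuousOn (fun s => iteratedDerivWithin 6 f (Set.Icc (x-h) (x+h)) (x - s*h))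
      (Set.uIcc (0:ℝ) 1) := hD6c.comp (by fun_prop) hmemM
  have i3m : IntervalIntegrable
      (fun s => iteratedDerivWithin 6 f (Set.Icc (x-h) (x+h)) (x - s*h) * (1-s)^3)
      MeasureTheory.volume 0 1 := (hcM.mul (by fun_prop)).intervalIntegrable
  have i3p : IntervalIntegrable
      (fun s => iteratedDerivWithin 6 f (Set.Icc (x-h) (x+h)) (x + s*h) * (1-s)^3)
      MeasureTheory.volume 0 1 := (hcP.mul (by fun_prop)).intervalIntegrable
  have i5m : IntervalIntegrable
      (fun s => iteratedDerivWithin 6 f (Set.Icc (x-h) (x+h)) (x - s*h) * (1-s)^5)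
      MeasureTheory.volume 0 1 := (hcM.mul (by fun_prop)).intervalIntegrable
  have i5p : IntervalIntegrable
      (fun s => iteratedDerivWithin 6 f (Set.Icc (x-h) (x+h)) (x + s*h) * (1-s)^5)
      MeasureTheory.volume 0 1 := (hcP.mul (by fun_prop)).intervalIntegrable
  have hI : (∫ s in (0:ℝ)..1,
        (iteratedDerivWithin 6 f (Set.Icc (x - h) (x + h)) (x - s * h)
          + iteratedDerivWithin 6 f (Set.Icc (x - h) (x + h)) (x + s * h)) *
          ((1 - s) ^ 3 * (5 - 3 * (1 - s) ^ 2)))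
      = 5 * (∫ s in (0:ℝ)..1,
            iteratedDerivWithin 6 f (Set.Icc (x-h) (x+h)) (x - s*h) * (1-s)^3)
        + 5 * (∫ s in (0:ℝ)..1,
            iteratedDerivWithin 6 f (Set.Icc (x-h) (x+h)) (x + s*h) * (1-s)^3)
        - 3 * (∫ s in (0:ℝ)..1,
            iteratedDerivWithin 6 f (Set.Icc (x-h) (x+h)) (x - s*h) * (1-s)^5)
        - 3 * (∫ s in (0:ℝ)..1,
            iteratedDerivWithin 6 f (Set.Icc (x-h) (x+h)) (x + s*h) * (1-s)^5) := by
    rw [show (∫ s in (0:ℝ)..1,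
        (iteratedDerivWithin 6 f (Set.Icc (x - h) (x + h)) (x - s * h)
          + iteratedDerivWithin 6 f (Set.Icc (x - h) (x + h)) (x + s * h)) *
          ((1 - s) ^ 3 * (5 - 3 * (1 - s) ^ 2)))
      = ∫ s in (0:ℝ)..1,
          (5 * (iteratedDerivWithin 6 f (Set.Icc (x-h) (x+h)) (x - s*h) * (1-s)^3)
            + 5 * (iteratedDerivWithin 6 f (Set.Icc (x-h) (x+h)) (x + s*h) * (1-s)^3))
          - (3 * (iteratedDerivWithin 6 f (Set.Icc (x-h) (x+h)) (x - s*h) * (1-s)^5)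
            + 3 * (iteratedDerivWithin 6 f (Set.Icc (x-h) (x+h)) (x + s*h) * (1-s)^5))
      from intervalIntegral.integral_congr (fun s _ => by ring)]
    rw [intervalIntegral.integral_sub ((i3m.const_mul 5).add (i3p.const_mul 5))
        ((i5m.const_mul 3).add (i5p.const_mul 3)),
      intervalIntegral.integral_add (i3m.const_mul 5) (i3p.const_mul 5),
      intervalIntegral.integral_add (i5m.const_mul 3) (i5p.const_mul 3),
      intervalIntegral.integral_const_mul, intervalIntegral.integral_const_mul,
      intervalIntegral.integral_const_mul, intervalIntegral.integral_const_mul]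
    ring
  rw [hI]
  field_simp
  have hcomm : ∀ s : ℝ, h * s = s * h := fun s => mul_comm h s
  simp only [hcomm]
  linear_combination (360*h^2)*E3m + (360*h^2)*E3p + (-4320 : ℝ)*E5m + (-4320 : ℝ)*E5p
end
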